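/- Let F: [a,b] × ℝ² → ℝ be continuous and satisfy: (i) F is non-decreasing in the second variable, i.e. (F(x,y,z) − F(x,ỹ,z))(y − ỹ) ≥ 0 for all x ∈ [a,b] and y, ỹ, z ∈ ℝ; (ii) F is globally Lipschitz in the third variable, i.e. there is k ≥ 0 with |F(x,y,z) − F(x,y,z̃)| ≤ k|z − z̃| for all x ∈ [a,b], y, z, z̃ ∈ ℝ. Then for any A, B ∈ ℝ the boundary value problem Lu = F(x,u,u'), u(a) = A, u(b) = B has at most one solution u ∈ C¹([a,b]). -/

import Mathlib

open Set MeasureTheory intervalIntegral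

/-- A function `u ∈ C¹([a,b])` is a solution of the boundary value problem
`Lu = F(x,u,u')`, `u(a) = A`, `u(b) = B` for the second order operator `L` with
generalized drift (with data `σ` and `Σ = Sig`) if `u(a) = A`, `u(b) = B` and,
denoting by `d` the derivative of `u` on `[a,b]` (which is continuous), there is
`x₁ ∈ ℝ` such that
`u'(x) = e^{−Σ(x)} (2 ∫_a^x e^{Σ(y)} F(y,u(y),u'(y))/σ²(y) dy + x₁)` on `[a,b]`. -/
def IsBVPSolutionF (σ Sig : ℝ → ℝ) (a b A B : ℝ) (F : ℝ → ℝ → ℝ → ℝ) (u : ℝ → ℝ) :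
    Prop :=
  u a = A ∧ u b = B ∧
  ∃ (d : ℝ → ℝ) (x₁ : ℝ),
    ContinuousOn d (Set.Icc a b) ∧
    (∀ x ∈ Set.Icc a b, HasDerivWithinAt u (d x) (Set.Icc a b) x) ∧
    ∀ x ∈ Set.Icc a b,
      d x = Real.exp (-(Sig x)) *
        (2 * (∫ y in a..x, Real.exp (Sig y) * F y (u y) (d y) / (σ y) ^ 2) + x₁)

private lemma bvp_ftc {G : ℝ → ℝ} {a b : ℝ} (hG : ContinuousOn G (Icc a b))
    {x : ℝ} (hx : x ∈ Ioo a b) :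
    HasDerivAt (fun x => ∫ y in a..x, G y) (G x) x := by
  apply intervalIntegral.integral_hasDerivAt_right
  · exact (hG.mono (Icc_subset_Icc le_rfl hx.2.le)).intervalIntegrable_of_Icc hx.1.le
  · exact (hG.mono Ioo_subset_Icc_self).stronglyMeasurableAtFilter isOpen_Ioo x hx
  · exact (hG x (Ioo_subset_Icc_self hx)).continuousAt (Icc_mem_nhds hx.1 hx.2)

/-- The pointwise differential inequality `C·H(x) ≤ H'(x)` needed in the
Grönwall-type argument, extracted with a minimal context. -/
private lemma bvp_diffineq {E s2 Fu Fm Fv D C k : ℝ}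
    (hE : 0 < E) (hs2 : 0 < s2) (hk : 0 ≤ k)
    (hD : D < 0) (hCle : 2 * k / s2 ≤ C)
    (hm1 : 0 ≤ Fu - Fm) (hm2 : k * D ≤ Fm - Fv) :
    C * (E * D) ≤ 2 * (E * Fu / s2) - 2 * (E * Fv / s2) := by
  have hFuv : k * D ≤ Fu - Fv := by linarith
  have hED : E * D ≤ 0 := by nlinarith
  calc C * (E * D) ≤ (2 * k / s2) * (E * D) := mul_le_mul_of_nonpos_right hCle hED
    _ = (2 * E / s2) * (k * D) := by ring
    _ ≤ (2 * E / s2) * (Fu - Fv) := by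
        apply mul_le_mul_of_nonneg_left hFuv; positivity
    _ = 2 * (E * Fu / s2) - 2 * (E * Fv / s2) := by ring

set_option maxHeartbeats 1000000 in
private lemma bvp_solution_le
    (σ Sig : ℝ → ℝ) (hσ : Continuous σ) (hSig : Continuous Sig)
    (hσpos : ∀ x, 0 < σ x) (a b : ℝ) (hab : a < b)
    (F : ℝ → ℝ → ℝ → ℝ)
    (hF : ContinuousOn (fun p : ℝ × ℝ × ℝ => F p.1 p.2.1 p.2.2)
      {p : ℝ × ℝ × ℝ | p.1 ∈ Icc a b})
    (hmono : ∀ x ∈ Icc a b, ∀ y ytilde z : ℝ,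
      0 ≤ (F x y z - F x ytilde z) * (y - ytilde))
    (k : ℝ) (hk : 0 ≤ k)
    (hLip : ∀ x ∈ Icc a b, ∀ y z ztilde : ℝ,
      |F x y z - F x y ztilde| ≤ k * |z - ztilde|)
    (A B : ℝ) (u v : ℝ → ℝ)
    (hu : IsBVPSolutionF σ Sig a b A B F u)
    (hv : IsBVPSolutionF σ Sig a b A B F v) :
    ∀ x ∈ Icc a b, u x ≤ v x := by
  obtain ⟨huA, huB, du, x₁u, hduc, hdud, hdue⟩ := hu
  obtain ⟨hvA, hvB, dv, x₁v, hdvc, hdvd, hdve⟩ := hv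
  have hucont : ContinuousOn u (Icc a b) := fun x hx => (hdud x hx).continuousWithinAt
  have hvcont : ContinuousOn v (Icc a b) := fun x hx => (hdvd x hx).continuousWithinAt
  -- the two integrands
  set Gu : ℝ → ℝ := fun y => Real.exp (Sig y) * F y (u y) (du y) / (σ y) ^ 2 with hGudef
  set Gv : ℝ → ℝ := fun y => Real.exp (Sig y) * F y (v y) (dv y) / (σ y) ^ 2 with hGvdef
  have hGcont : ∀ (w d : ℝ → ℝ), ContinuousOn w (Icc a b) → ContinuousOn d (Icc a b) →
      ContinuousOn (fun y => Real.exp (Sig y) * F y (w y) (d y) / (σ y) ^ 2) (Icc a b) := by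
    intro w d hw hd
    apply ContinuousOn.div
    · apply ContinuousOn.mul ((Real.continuous_exp.comp hSig).continuousOn)
      refine hF.comp (continuousOn_id.prodMk (hw.prodMk hd)) ?_
      exact fun y hy => by simpa using hy
    · exact (hσ.pow 2).continuousOn
    · intro y _; exact pow_ne_zero 2 (ne_of_gt (hσpos y))
  have hGuc : ContinuousOn Gu (Icc a b) := by
    rw [hGudef]; exact hGcont u du hucont hduc
  have hGvc : ContinuousOn Gv (Icc a b) := by
    rw [hGvdef]; exact hGcont v dv hvcont hdvc
  have hGuGv : ∀ x : ℝ, Gu x = Real.exp (Sig x) * F x (u x) (du x) / (σ x) ^ 2 ∧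
      Gv x = Real.exp (Sig x) * F x (v x) (dv x) / (σ x) ^ 2 := fun x => ⟨rfl, rfl⟩
  clear_value Gu Gv
  clear hGudef hGvdef
  -- the primitive H of 2(Gu - Gv)
  set H : ℝ → ℝ := fun x =>
    2 * (∫ y in a..x, Gu y) - 2 * (∫ y in a..x, Gv y) + (x₁u - x₁v) with hHdef
  have hHd : ∀ x ∈ Ioo a b, HasDerivAt H (2 * Gu x - 2 * Gv x) x := by
    intro x hx
    rw [hHdef]
    exact (((bvp_ftc hGuc hx).const_mul 2).sub ((bvp_ftc hGvc hx).const_mul 2)).add_const _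
  -- h = e^Σ (u' - v') agrees with H on [a,b]
  set h : ℝ → ℝ := fun x => Real.exp (Sig x) * (du x - dv x) with hhdef
  have hheq : ∀ x : ℝ, h x = Real.exp (Sig x) * (du x - dv x) := fun x => rfl
  have hexp1 : ∀ x : ℝ, Real.exp (Sig x) * Real.exp (-(Sig x)) = 1 := by
    intro x; rw [← Real.exp_add, add_neg_cancel, Real.exp_zero]
  have hHh : ∀ x ∈ Icc a b, H x = h x := by
    intro x hx
    rw [hHdef, hhdef]
    simp only
    rw [hdue x hx, hdve x hx, mul_sub, ← mul_assoc, ← mul_assoc, hexp1 x, one_mul, one_mul]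
    ring
  have hhcont : ContinuousOn h (Icc a b) := by
    rw [hhdef]
    exact ((Real.continuous_exp.comp hSig).continuousOn).mul (hduc.sub hdvc)
  clear_value h H
  clear hhdef hHdef
  -- the constant C
  obtain ⟨z, hz, hzmin⟩ := isCompact_Icc.exists_isMinOn (nonempty_Icc.2 hab.le)
    ((hσ.pow 2).continuousOn : ContinuousOn (fun x => (σ x) ^ 2) (Icc a b))
  obtain ⟨C, hCdef⟩ : ∃ C : ℝ, C = 2 * k / (σ z) ^ 2 := ⟨_, rfl⟩
  have hCle : ∀ x ∈ Icc a b, 2 * k / (σ x) ^ 2 ≤ C := by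
    intro x hx
    have h1 : (σ z) ^ 2 ≤ (σ x) ^ 2 := hzmin hx
    have h2 : 0 < (σ z) ^ 2 := pow_pos (hσpos z) 2
    rw [hCdef]
    gcongr
  -- main argument
  by_contra hcon
  push_neg at hcon
  obtain ⟨p, hp, hpv⟩ := hcon
  set w : ℝ → ℝ := fun x => u x - v x with hwdef
  have hweq : ∀ x : ℝ, w x = u x - v x := fun x => rfl
  have hwcont : ContinuousOn w (Icc a b) := by
    rw [hwdef]; exact hucont.sub hvcont
  have hwd : ∀ x ∈ Ioo a b, HasDerivAt w (du x - dv x) x := by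
    intro x hx
    rw [hwdef]
    exact (((hdud x (Ioo_subset_Icc_self hx)).sub (hdvd x (Ioo_subset_Icc_self hx))).hasDerivAt
      (Icc_mem_nhds hx.1 hx.2))
  clear_value w
  clear hwdef
  obtain ⟨xm, hxm, hxmax⟩ := isCompact_Icc.exists_isMaxOn ⟨p, hp⟩ hwcont
  obtain ⟨M, hMdef⟩ : ∃ M : ℝ, M = w xm := ⟨_, rfl⟩
  have hM : 0 < M := by
    rw [hMdef]
    refine lt_of_lt_of_le ?_ (hxmax hp)
    rw [hweq p]
    linarith
  have hwa : w a = 0 := by rw [hweq a, huA, hvA, sub_self]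
  have hwb : w b = 0 := by rw [hweq b, huB, hvB, sub_self]
  have hxma : a < xm := by
    rcases eq_or_lt_of_le hxm.1 with e | e
    · exfalso; rw [hMdef, ← e, hwa] at hM; exact lt_irrefl _ hM
    · exact e
  have hxmb : xm < b := by
    rcases eq_or_lt_of_le hxm.2 with e | e
    · exfalso; rw [hMdef, e, hwb] at hM; exact lt_irrefl _ hM
    · exact e
  -- derivative of w vanishes at xm
  have hloc : IsLocalMax w xm := hxmax.isLocalMax (Icc_mem_nhds hxma hxmb)
  have hdm0 : du xm - dv xm = 0 := hloc.hasDerivAt_eq_zero (hwd xm ⟨hxma, hxmb⟩)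
  have hhxm : h xm = 0 := by rw [hheq xm, hdm0, mul_zero]
  -- the first time t where w drops to M/2
  set S : Set ℝ := Icc xm b ∩ w ⁻¹' (Iic (M / 2)) with hSdef
  have hScl : IsClosed S := by
    rw [hSdef]
    exact (hwcont.mono (Icc_subset_Icc hxm.1 le_rfl)).preimage_isClosed_of_isClosed
      isClosed_Icc isClosed_Iic
  have hSmem : ∀ x : ℝ, x ∈ S ↔ (x ∈ Icc xm b ∧ w x ≤ M / 2) := fun x => Iff.rfl
  clear_value S
  clear hSdef
  have hbS : b ∈ S := (hSmem b).2 ⟨⟨hxm.2, le_rfl⟩, by rw [hwb]; linarith⟩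
  have hSbdd : BddBelow S := ⟨xm, fun x hx => ((hSmem x).1 hx).1.1⟩
  obtain ⟨t, htdef⟩ : ∃ t : ℝ, t = sInf S := ⟨_, rfl⟩
  have htS : t ∈ S := htdef ▸ hScl.csInf_mem ⟨b, hbS⟩ hSbdd
  have htIcc : t ∈ Icc xm b := ((hSmem t).1 htS).1
  have hwt : w t ≤ M / 2 := ((hSmem t).1 htS).2
  have htxm : xm < t := by
    rcases eq_or_lt_of_le htIcc.1 with e | e
    · exfalso; rw [← e, ← hMdef] at hwt; linarith
    · exact e
  -- t < b via the intermediate value theorem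
  have htb : t < b := by
    have hsub : Icc (w b) (w xm) ⊆ w '' Icc xm b :=
      intermediate_value_Icc' hxm.2 (hwcont.mono (Icc_subset_Icc hxm.1 le_rfl))
    obtain ⟨c, hc, hwc⟩ := hsub (show M / 2 ∈ Icc (w b) (w xm) by
      rw [hwb, ← hMdef]; constructor <;> linarith)
    have hcb : c < b := by
      rcases eq_or_lt_of_le hc.2 with e | e
      · exfalso; rw [e, hwb] at hwc; linarith
      · exact e
    have hcS : c ∈ S := (hSmem c).2 ⟨hc, le_of_eq hwc⟩
    exact lt_of_le_of_lt (htdef ▸ csInf_le hSbdd hcS) hcb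
  have hIccab : Icc xm t ⊆ Icc a b := Icc_subset_Icc hxm.1 htIcc.2
  have hwgt : ∀ x, xm ≤ x → x < t → M / 2 < w x := by
    intro x hx1 hx2
    by_contra hle
    push_neg at hle
    have : t ≤ x := htdef ▸ csInf_le hSbdd ((hSmem x).2 ⟨⟨hx1, hx2.le.trans htIcc.2⟩, hle⟩)
    linarith
  -- KEY CLAIM: h ≥ 0 on [xm, t]
  have hh : ∀ r ∈ Icc xm t, 0 ≤ h r := by
    by_contra hcon2
    push_neg at hcon2
    obtain ⟨r, hr, hhr⟩ := hcon2
    set S2 : Set ℝ := Icc xm r ∩ h ⁻¹' (Ici 0) with hS2def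
    have hS2cl : IsClosed S2 := by
      rw [hS2def]
      exact (hhcont.mono ((Icc_subset_Icc le_rfl hr.2).trans hIccab)).preimage_isClosed_of_isClosed
        isClosed_Icc isClosed_Ici
    have hS2mem : ∀ x : ℝ, x ∈ S2 ↔ (x ∈ Icc xm r ∧ 0 ≤ h x) := fun x => Iff.rfl
    clear_value S2
    clear hS2def
    have hxmS2 : xm ∈ S2 := (hS2mem xm).2 ⟨⟨le_rfl, hr.1⟩, le_of_eq hhxm.symm⟩
    have hS2bdd : BddAbove S2 := ⟨r, fun x hx => ((hS2mem x).1 hx).1.2⟩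
    obtain ⟨s, hsdef⟩ : ∃ s : ℝ, s = sSup S2 := ⟨_, rfl⟩
    have hsS2 : s ∈ S2 := hsdef ▸ hS2cl.csSup_mem ⟨xm, hxmS2⟩ hS2bdd
    have hs0 : 0 ≤ h s := ((hS2mem s).1 hsS2).2
    have hsxm : xm ≤ s := ((hS2mem s).1 hsS2).1.1
    have hsr : s < r := by
      rcases eq_or_lt_of_le ((hS2mem s).1 hsS2).1.2 with e | e
      · exfalso; rw [e] at hs0; linarith
      · exact e
    have hneg : ∀ x, s < x → x ≤ r → h x < 0 := by
      intro x hx1 hx2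
      by_contra hle
      push_neg at hle
      have : x ≤ s := hsdef ▸ le_csSup hS2bdd ((hS2mem x).2 ⟨⟨hsxm.trans hx1.le, hx2⟩, hle⟩)
      linarith
    have hsrab : Icc s r ⊆ Ioo a b := fun x hx =>
      ⟨hxma.trans_le (hsxm.trans hx.1), ((hx.2.trans hr.2).trans_lt htb)⟩
    -- Φ = e^{-Cx} H is monotone on [s,r]
    set Φ : ℝ → ℝ := fun x => Real.exp (-C * x) * H x with hΦdef
    have hΦeq : ∀ x : ℝ, Φ x = Real.exp (-C * x) * H x := fun x => rfl
    have hΦd : ∀ x ∈ Ioo a b, HasDerivAt Φ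
        (Real.exp (-C * x) * (-C) * H x + Real.exp (-C * x) * (2 * Gu x - 2 * Gv x)) x := by
      intro x hx
      rw [hΦdef]
      have h1 : HasDerivAt (fun x : ℝ => Real.exp (-C * x)) (Real.exp (-C * x) * (-C)) x := by
        have := ((hasDerivAt_id x).const_mul (-C)).exp
        simpa using this
      exact h1.mul (hHd x hx)
    clear_value Φ
    clear hΦdef
    have hmonoΦ : MonotoneOn Φ (Icc s r) := by
      apply monotoneOn_of_deriv_nonneg (convex_Icc s r)
      · exact fun x hx => ((hΦd x (hsrab hx)).continuousAt).continuousWithinAt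
      · rw [interior_Icc]
        exact fun x hx => ((hΦd x (hsrab (Ioo_subset_Icc_self hx))).differentiableAt
          ).differentiableWithinAt
      · rw [interior_Icc]
        intro x hx
        have hxIoo : x ∈ Ioo a b := hsrab (Ioo_subset_Icc_self hx)
        have hxab : x ∈ Icc a b := Ioo_subset_Icc_self hxIoo
        rw [(hΦd x hxIoo).deriv]
        -- the differential inequality at x
        have hhx : h x < 0 := hneg x hx.1 hx.2.le
        have hHx : H x = h x := hHh x hxab
        have hwx : M / 2 < w x := hwgt x (hsxm.trans hx.1.le) (hx.2.trans_le hr.2)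
        have hE : 0 < Real.exp (Sig x) := Real.exp_pos _
        have hD : du x - dv x < 0 := by
          rw [hheq x] at hhx
          nlinarith
        have m1 : 0 ≤ F x (u x) (du x) - F x (v x) (du x) := by
          have hm1 := hmono x hxab (u x) (v x) (du x)
          have hwx' : 0 < u x - v x := by rw [hweq x] at hwx; linarith
          nlinarith
        have m2 : k * (du x - dv x) ≤ F x (v x) (du x) - F x (v x) (dv x) := by
          have hl := (abs_le.1 (hLip x hxab (v x) (du x) (dv x))).1
          rw [abs_of_neg hD] at hl
          linarith
        have hs2 : 0 < (σ x) ^ 2 := pow_pos (hσpos x) 2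
        have hchain : C * H x ≤ 2 * Gu x - 2 * Gv x := by
          rw [hHx, hheq x, (hGuGv x).1, (hGuGv x).2]
          have := bvp_diffineq hE hs2 hk hD (hCle x hxab) m1 m2
          calc C * (Real.exp (Sig x) * (du x - dv x)) ≤
              2 * (Real.exp (Sig x) * F x (u x) (du x) / (σ x) ^ 2) -
              2 * (Real.exp (Sig x) * F x (v x) (dv x) / (σ x) ^ 2) := this
            _ = 2 * (Real.exp (Sig x) * F x (u x) (du x) / (σ x) ^ 2) -
              2 * (Real.exp (Sig x) * F x (v x) (dv x) / (σ x) ^ 2) := rfl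
        have hexpC : (0:ℝ) < Real.exp (-C * x) := Real.exp_pos _
        have e : Real.exp (-C * x) * (-C) * H x + Real.exp (-C * x) * (2 * Gu x - 2 * Gv x)
            = Real.exp (-C * x) * ((2 * Gu x - 2 * Gv x) - C * H x) := by ring
        rw [e]
        apply mul_nonneg hexpC.le
        linarith
    -- contradiction from monotonicity
    have hΦsr : Φ s ≤ Φ r := hmonoΦ (left_mem_Icc.2 hsr.le) (right_mem_Icc.2 hsr.le) hsr.le
    have hΦs : 0 ≤ Φ s := by
      rw [hΦeq s, hHh s (hIccab ⟨hsxm, hsr.le.trans hr.2⟩)]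
      exact mul_nonneg (Real.exp_pos _).le hs0
    have hΦr : Φ r < 0 := by
      rw [hΦeq r, hHh r (hIccab hr)]
      exact mul_neg_of_pos_of_neg (Real.exp_pos _) hhr
    linarith
  -- w is monotone on [xm, t]
  have hwmono : MonotoneOn w (Icc xm t) := by
    apply monotoneOn_of_deriv_nonneg (convex_Icc xm t)
    · exact hwcont.mono hIccab
    · rw [interior_Icc]
      intro x hx
      have hxIoo : x ∈ Ioo a b := ⟨hxma.trans hx.1, hx.2.trans htb⟩
      exact ((hwd x hxIoo).differentiableAt).differentiableWithinAt
    · rw [interior_Icc]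
      intro x hx
      have hxIoo : x ∈ Ioo a b := ⟨hxma.trans hx.1, hx.2.trans htb⟩
      rw [(hwd x hxIoo).deriv]
      have hhx : 0 ≤ h x := hh x (Ioo_subset_Icc_self hx)
      rw [hheq x] at hhx
      have hE : 0 < Real.exp (Sig x) := Real.exp_pos _
      nlinarith
  have hfin : M ≤ w t := by
    rw [hMdef]
    exact hwmono (left_mem_Icc.2 htIcc.1) (right_mem_Icc.2 htIcc.1) htIcc.1
  linarith

/-- if `F` is continuous, non-decreasing in the second variable and
globally Lipschitz in the third variable, then for any `A, B ∈ ℝ` the boundary value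
problem `Lu = F(x,u,u')`, `u(a) = A`, `u(b) = B` has at most one `C¹` solution. -/
theorem bvp_at_most_one_solution
    (σ Sig : ℝ → ℝ) (hσ : Continuous σ) (hSig : Continuous Sig)
    (hσpos : ∀ x, 0 < σ x) (a b : ℝ) (hab : a < b)
    (F : ℝ → ℝ → ℝ → ℝ)
    (hF : ContinuousOn (fun p : ℝ × ℝ × ℝ => F p.1 p.2.1 p.2.2)
      {p : ℝ × ℝ × ℝ | p.1 ∈ Icc a b})
    (hmono : ∀ x ∈ Icc a b, ∀ y ytilde z : ℝ,
      0 ≤ (F x y z - F x ytilde z) * (y - ytilde))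
    (k : ℝ) (hk : 0 ≤ k)
    (hLip : ∀ x ∈ Icc a b, ∀ y z ztilde : ℝ,
      |F x y z - F x y ztilde| ≤ k * |z - ztilde|)
    (A B : ℝ) (u v : ℝ → ℝ)
    (hu : IsBVPSolutionF σ Sig a b A B F u)
    (hv : IsBVPSolutionF σ Sig a b A B F v) :
    EqOn u v (Icc a b) := fun x hx =>
  le_antisymm
    (bvp_solution_le σ Sig hσ hSig hσpos a b hab F hF hmono k hk hLip A B u v hu hv x hx)
    (bvp_solution_le σ Sig hσ hSig hσpos a b hab F hF hmono k hk hLip A B v u hv hu x hx)
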